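/- Define K(r) := (1/π)(r·√(1-r²) - arccos r) + 1 and L(r) := (1/π)(√(1-r²) - r·arccos r) + r. For all r, s ∈ [-1, 1] and every real w ≥ 0, if K(r) < K(s) then r + w·L(r) < s + w·L(s). -/

import Mathlib

open Real

private lemma sqrt_hasDerivAt {x : ℝ} (h0 : (0:ℝ) < 1 - x ^ 2) :
    HasDerivAt (fun y : ℝ => Real.sqrt (1 - y ^ 2)) (-x / Real.sqrt (1 - x ^ 2)) x := by
  have h1 : HasDerivAt (fun y : ℝ => 1 - y ^ 2) (-(2 * x)) x := by
    simpa using (hasDerivAt_pow 2 x).const_sub 1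
  have h2 := (Real.hasDerivAt_sqrt (ne_of_gt h0)).comp x h1
  refine h2.congr_deriv ?_
  have hs : Real.sqrt (1 - x ^ 2) ≠ 0 := by positivity
  field_simp

private lemma K_mono : MonotoneOn
    (fun x : ℝ => (1 / π) * (x * Real.sqrt (1 - x ^ 2) - Real.arccos x) + 1)
    (Set.Icc (-1 : ℝ) 1) := by
  have hc : ContinuousOn
      (fun x : ℝ => (1 / π) * (x * Real.sqrt (1 - x ^ 2) - Real.arccos x) + 1)
      (Set.Icc (-1 : ℝ) 1) := by
    apply ContinuousOn.add _ continuousOn_const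
    apply ContinuousOn.mul continuousOn_const
    exact ((continuousOn_id.mul ((continuous_const.sub (continuous_pow 2)).continuousOn.sqrt)).sub
      Real.continuous_arccos.continuousOn)
  have key : ∀ x ∈ Set.Ioo (-1 : ℝ) 1,
      HasDerivAt (fun x : ℝ => (1 / π) * (x * Real.sqrt (1 - x ^ 2) - Real.arccos x) + 1)
        ((2 / π) * Real.sqrt (1 - x ^ 2)) x := by
    intro x hx
    have hx1 : x ≠ 1 := ne_of_lt hx.2
    have hx2 : x ≠ -1 := ne_of_gt hx.1
    have h0 : (0:ℝ) < 1 - x ^ 2 := by nlinarith [hx.1, hx.2]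
    have hsq : Real.sqrt (1 - x ^ 2) ≠ 0 := by positivity
    have hsq2 : Real.sqrt (1 - x ^ 2) ^ 2 = 1 - x ^ 2 := Real.sq_sqrt h0.le
    have h1 : HasDerivAt (fun y : ℝ => y * Real.sqrt (1 - y ^ 2))
        (Real.sqrt (1 - x ^ 2) + x * (-x / Real.sqrt (1 - x ^ 2))) x := by
      exact ((hasDerivAt_id' x).mul (sqrt_hasDerivAt h0)).congr_deriv (by simp)
    have h2 : HasDerivAt Real.arccos (-(1 / Real.sqrt (1 - x ^ 2))) x :=
      Real.hasDerivAt_arccos hx2 hx1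
    have h3 := ((h1.sub h2).const_mul (1 / π)).add_const 1
    refine h3.congr_deriv ?_
    have hpi : π ≠ 0 := Real.pi_ne_zero
    field_simp
    linear_combination (-1 : ℝ) * hsq2
  apply monotoneOn_of_deriv_nonneg (convex_Icc _ _) hc
  · intro x hx
    rw [interior_Icc] at hx
    exact (key x hx).differentiableAt.differentiableWithinAt
  · intro x hx
    rw [interior_Icc] at hx
    rw [(key x hx).deriv]
    have : (0:ℝ) ≤ Real.sqrt (1 - x ^ 2) := Real.sqrt_nonneg _
    positivity

private lemma L_mono : MonotoneOn
    (fun x : ℝ => (1 / π) * (Real.sqrt (1 - x ^ 2) - x * Real.arccos x) + x)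
    (Set.Icc (-1 : ℝ) 1) := by
  have hc : ContinuousOn
      (fun x : ℝ => (1 / π) * (Real.sqrt (1 - x ^ 2) - x * Real.arccos x) + x)
      (Set.Icc (-1 : ℝ) 1) := by
    apply ContinuousOn.add _ continuousOn_id
    apply ContinuousOn.mul continuousOn_const
    exact (((continuous_const.sub (continuous_pow 2)).continuousOn.sqrt).sub
      (continuousOn_id.mul Real.continuous_arccos.continuousOn))
  have key : ∀ x ∈ Set.Ioo (-1 : ℝ) 1,
      HasDerivAt (fun x : ℝ => (1 / π) * (Real.sqrt (1 - x ^ 2) - x * Real.arccos x) + x)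
        (1 - Real.arccos x / π) x := by
    intro x hx
    have hx1 : x ≠ 1 := ne_of_lt hx.2
    have hx2 : x ≠ -1 := ne_of_gt hx.1
    have h0 : (0:ℝ) < 1 - x ^ 2 := by nlinarith [hx.1, hx.2]
    have hsq : Real.sqrt (1 - x ^ 2) ≠ 0 := by positivity
    have hsq2 : Real.sqrt (1 - x ^ 2) ^ 2 = 1 - x ^ 2 := Real.sq_sqrt h0.le
    have h2 : HasDerivAt Real.arccos (-(1 / Real.sqrt (1 - x ^ 2))) x :=
      Real.hasDerivAt_arccos hx2 hx1
    have h1 : HasDerivAt (fun y : ℝ => y * Real.arccos y)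
        (Real.arccos x + x * -(1 / Real.sqrt (1 - x ^ 2))) x := by
      exact ((hasDerivAt_id' x).mul h2).congr_deriv (by simp)
    have h3 := (((sqrt_hasDerivAt h0).sub h1).const_mul (1 / π)).add (hasDerivAt_id x)
    refine h3.congr_deriv ?_
    have hpi : π ≠ 0 := Real.pi_ne_zero
    field_simp
    linear_combination (0 : ℝ) * hsq2
  apply monotoneOn_of_deriv_nonneg (convex_Icc _ _) hc
  · intro x hx
    rw [interior_Icc] at hx
    exact (key x hx).differentiableAt.differentiableWithinAt
  · intro x hx
    rw [interior_Icc] at hx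
    rw [(key x hx).deriv]
    have h1 : Real.arccos x ≤ π := Real.arccos_le_pi x
    have h2 : 0 < π := Real.pi_pos
    have : Real.arccos x / π ≤ 1 := by
      rw [div_le_one h2]; exact h1
    linarith

/-- Comparison of describing-function gain and bias: for
`K(r) = (1/π)(r·√(1-r²) - arccos r) + 1` and
`L(r) = (1/π)(√(1-r²) - r·arccos r) + r`, if `r, s ∈ [-1,1]`, `w ≥ 0`,
and `K(r) < K(s)`, then `r + w·L(r) < s + w·L(s)`. -/
theorem describing_gain_bias_comparison
    (r s w : ℝ) (hr : r ∈ Set.Icc (-1 : ℝ) 1) (hs : s ∈ Set.Icc (-1 : ℝ) 1)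
    (hw : 0 ≤ w)
    (hK : (1 / π) * (r * Real.sqrt (1 - r ^ 2) - Real.arccos r) + 1 <
          (1 / π) * (s * Real.sqrt (1 - s ^ 2) - Real.arccos s) + 1) :
    r + w * ((1 / π) * (Real.sqrt (1 - r ^ 2) - r * Real.arccos r) + r) <
      s + w * ((1 / π) * (Real.sqrt (1 - s ^ 2) - s * Real.arccos s) + s) := by
  have hrs : r < s := by
    by_contra h
    push_neg at h
    exact absurd (K_mono hs hr h) (not_le.mpr hK)
  have hL := L_mono hr hs hrs.le
  have := mul_le_mul_of_nonneg_left hL hw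
  linarith
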